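/- (Correctness of the list-decoder for the new subspace codes.) Let s ≥ 1, 1 ≤ k ≤ m, and let γ ∈ F_{q^m} be such that γ, γ^q, ..., γ^{q^{m−1}} are pairwise distinct. Let α_1, ..., α_n ∈ F_{q^m} be linearly independent over F_q with k ≤ n, let u ∈ F_{q^m}^k be a message with linearized message polynomial f_u(X) = ∑_{j=0}^{k−1} u_j X^{q^j}, and let V be the F_q-linear span in F_{q^m}^{s+1} of the vectors (α_i, f_u(α_i), f_u(γα_i), ..., f_u(γ^{s−1}α_i)), i = 1, ..., n. Let ρ, t ≥ 0 and let U be an F_q-subspace of F_{q^m}^{s+1} of dimension r = n−ρ+t with dim_{F_q}(U ∩ V) ≥ n−ρ. Set d = ⌈(r + s(k−1) + 1)/(s+1)⌉ and assume k ≤ d. If s·ρ + t < n·s − s(k−1), then: (i) there exist linearized polynomials Q_0, ..., Q_s over F_{q^m}, not all zero, with Q_0 of q-degree at most d−1 and each Q_i (i ≥ 1) of q-degree at most d−k, vanishing on U (i.e., Q_0(x) + ∑_{i=1}^{s} Q_i(y_i) = 0 for all (x, y_1, ..., y_s) ∈ U); (ii) for every such nonzero tuple (Q_0, ..., Q_s),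 the message polynomial f_u satisfies Q_0(X) + ∑_{i=1}^{s} Q_i(f_u(γ^{i−1}X)) = 0 as a polynomial identity; and (iii) the number of linearized polynomials f of q-degree at most k−1 satisfying this identity is at most q^{m(s−1)}. -/

import Mathlib

open Polynomial

/-- The linearized polynomial `∑ i, a i * X^(q^i)` with coefficient vector `a`. -/
noncomputable def linPoly (q : ℕ) {F : Type*} [Field F] {D : ℕ} (a : Fin D → F) : Polynomial F :=
  ∑ i : Fin D, Polynomial.C (a i) * Polynomial.X ^ (q ^ (i : ℕ))

namespace SLDAux

variable {K F : Type*} [Field K] [Field F] [Algebra K F] [Fintype K]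

lemma sum_pow_charpow {p : ℕ} [Fact p.Prime] {R : Type*} [CommSemiring R] [CharP R p]
    {ι : Type*} (s : Finset ι) (f : ι → R) (n : ℕ) :
    (∑ i ∈ s, f i) ^ p ^ n = ∑ i ∈ s, (f i) ^ p ^ n := by
  classical
  induction s using Finset.induction with
  | empty => simp [zero_pow, pow_ne_zero, (Fact.out : p.Prime).ne_zero]
  | insert _ _ h ih => rw [Finset.sum_insert h, Finset.sum_insert h, add_pow_char_pow, ih]

lemma linPoly_sub (q : ℕ) {D : ℕ} (a a' : Fin D → F) :
    linPoly q (a - a') = linPoly q a - linPoly q a' := by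
  unfold linPoly
  rw [← Finset.sum_sub_distrib]
  refine Finset.sum_congr rfl fun i _ => ?_
  simp [sub_mul]

lemma linPoly_zero (q : ℕ) {D : ℕ} : linPoly q (0 : Fin D → F) = 0 := by
  simp [linPoly]

lemma natDegree_linPoly_le (q : ℕ) (hq : 1 ≤ q) {D : ℕ} (a : Fin D → F) :
    (linPoly q a).natDegree ≤ q ^ (D - 1) := by
  refine natDegree_sum_le_of_forall_le _ _ fun i _ => ?_
  refine (natDegree_C_mul_le _ _).trans ?_
  rw [natDegree_X_pow]
  exact Nat.pow_le_pow_right hq (by omega)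

lemma coeff_sum_C_mul_X_pow {ι : Type*} [Fintype ι] [DecidableEq ι] (g : ι → ℕ)
    (hg : Function.Injective g) (c : ι → F) (i₀ : ι) :
    (∑ i : ι, C (c i) * X ^ g i).coeff (g i₀) = c i₀ := by
  rw [finset_sum_coeff]
  rw [Finset.sum_congr rfl (fun i _ => ?_), Finset.sum_ite_eq' Finset.univ i₀ c]
  · simp
  · rw [coeff_C_mul, coeff_X_pow]
    by_cases h : i = i₀
    · simp [h]
    · have : ¬ (g i₀ = g i) := fun hh => h (hg hh.symm)
      simp [h, this]

lemma linPoly_ne_zero (q : ℕ) (hq : 2 ≤ q) {D : ℕ} {a : Fin D → F} (ha : a ≠ 0) :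
    linPoly q a ≠ 0 := by
  classical
  obtain ⟨i₀, hi₀⟩ := Function.ne_iff.mp ha
  intro h
  have := coeff_sum_C_mul_X_pow (F := F) (fun i : Fin D => q ^ (i : ℕ))
    (fun i j hij => Fin.val_injective (Nat.pow_right_injective hq hij)) a i₀
  rw [show (∑ i : Fin D, C (a i) * X ^ q ^ (i : ℕ)) = linPoly q a from rfl, h] at this
  simp at this
  exact hi₀ this.symm

lemma linPoly_comp_CX (q : ℕ) {D : ℕ} (a : Fin D → F) (g : F) :
    (linPoly q a).comp (C g * X) = linPoly q (fun j => a j * g ^ q ^ (j : ℕ)) := by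
  unfold linPoly
  rw [sum_comp]
  refine Finset.sum_congr rfl fun j _ => ?_
  rw [mul_comp, C_comp, pow_comp, X_comp, mul_pow, ← C_pow, ← mul_assoc, ← C_mul]

lemma linPoly_comp_linPoly {p : ℕ} [Fact p.Prime] [CharP F p] {e : ℕ} (q : ℕ)
    (hqpe : q = p ^ e) {D E : ℕ} (c : Fin D → F) (a : Fin E → F) :
    (linPoly q c).comp (linPoly q a) =
      ∑ i : Fin D, ∑ j : Fin E,
        C (c i * (a j) ^ q ^ (i : ℕ)) * X ^ q ^ ((i : ℕ) + (j : ℕ)) := by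
  unfold linPoly
  rw [sum_comp]
  refine Finset.sum_congr rfl fun i _ => ?_
  rw [mul_comp, C_comp, pow_comp, X_comp]
  have hpow : ∀ x : F[X], x ^ q ^ (i : ℕ) = x ^ p ^ (e * (i : ℕ)) := by
    intro x; rw [hqpe, ← pow_mul]
  have hpowF : ∀ x : F, x ^ q ^ (i : ℕ) = x ^ p ^ (e * (i : ℕ)) := by
    intro x; rw [hqpe, ← pow_mul]
  rw [hpow, sum_pow_charpow, Finset.mul_sum]
  refine Finset.sum_congr rfl fun j _ => ?_
  rw [mul_pow, ← C_pow, ← pow_mul, ← mul_assoc, ← C_mul, ← hpowF (a j)]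
  congr 2
  rw [show p ^ (e * (i : ℕ)) = q ^ (i : ℕ) by rw [hqpe, ← pow_mul], pow_add,
    mul_comm (q ^ (i : ℕ))]

lemma pow_q_add {p : ℕ} [Fact p.Prime] [CharP F p] {e q : ℕ} (hqpe : q = p ^ e)
    (i : ℕ) (x y : F) : (x + y) ^ q ^ i = x ^ q ^ i + y ^ q ^ i := by
  rw [hqpe, show (p ^ e) ^ i = p ^ (e * i) from (pow_mul p e i).symm]
  exact add_pow_char_pow ..

lemma pow_q_sub {p : ℕ} [Fact p.Prime] [CharP F p] {e q : ℕ} (hqpe : q = p ^ e)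
    (i : ℕ) (x y : F) : (x - y) ^ q ^ i = x ^ q ^ i - y ^ q ^ i := by
  rw [hqpe, show (p ^ e) ^ i = p ^ (e * i) from (pow_mul p e i).symm]
  exact sub_pow_char_pow ..

lemma K_pow_q {q : ℕ} (hK : Fintype.card K = q) (i : ℕ) (c : K) : c ^ q ^ i = c := by
  induction i with
  | zero => simp
  | succ n ih =>
    rw [pow_succ, pow_mul, ih, ← hK, FiniteField.pow_card]

noncomputable def evalLM (q : ℕ) {p : ℕ} [Fact p.Prime] [CharP F p] {e : ℕ}
    (hqpe : q = p ^ e) (hK : Fintype.card K = q) {D : ℕ} (a : Fin D → F) : F →ₗ[K] F where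
  toFun x := (linPoly q a).eval x
  map_add' x y := by
    simp only [linPoly, eval_finset_sum, eval_mul, eval_C, eval_pow, eval_X]
    rw [← Finset.sum_add_distrib]
    exact Finset.sum_congr rfl fun i _ => by rw [pow_q_add hqpe, mul_add]
  map_smul' c x := by
    simp only [linPoly, eval_finset_sum, eval_mul, eval_C, eval_pow, eval_X,
      RingHom.id_apply, Finset.smul_sum, Algebra.smul_def]
    rw [Finset.mul_sum]
    refine Finset.sum_congr rfl fun i _ => ?_
    rw [mul_pow, ← map_pow, K_pow_q hK]
    ring

lemma evalLM_apply (q : ℕ) {p : ℕ} [Fact p.Prime] [CharP F p] {e : ℕ}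
    (hqpe : q = p ^ e) (hK : Fintype.card K = q) {D : ℕ} (a : Fin D → F) (x : F) :
    evalLM (K := K) q hqpe hK a x = (linPoly q a).eval x := rfl

lemma coeff_double_sum (q : ℕ) (hq2 : 2 ≤ q) {D E : ℕ} (t : Fin D → Fin E → F) (N : ℕ) :
    (∑ i : Fin D, ∑ j : Fin E, C (t i j) * X ^ q ^ ((i : ℕ) + (j : ℕ))).coeff (q ^ N)
      = ∑ i : Fin D, ∑ j : Fin E, if (i : ℕ) + (j : ℕ) = N then t i j else 0 := by
  rw [finset_sum_coeff]
  refine Finset.sum_congr rfl fun i _ => ?_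
  rw [finset_sum_coeff]
  refine Finset.sum_congr rfl fun j _ => ?_
  rw [coeff_C_mul, coeff_X_pow]
  have h2 : (q ^ N = q ^ ((i : ℕ) + (j : ℕ))) ↔ (((i : ℕ) + (j : ℕ)) = N) :=
    ⟨fun h => (Nat.pow_right_injective hq2 h).symm, fun h => by rw [h]⟩
  rw [if_congr h2 rfl rfl, mul_ite, mul_one, mul_zero]

end SLDAux

set_option maxHeartbeats 2000000 in
/-- Correctness of the list-decoder for the new subspace codes: if the received subspace `U`
has dimension `r = n - ρ + t`, intersects the codeword subspace `V` of the message `u` in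
dimension at least `n - ρ`, `d = ⌈(r + s(k-1) + 1)/(s+1)⌉ ≥ k`, and `sρ + t < ns - s(k-1)`,
then (i) a nonzero interpolation tuple `(Q_0, …, Q_s)` with the prescribed degree bounds
vanishing on `U` exists, (ii) every such tuple satisfies
`Q_0(X) + ∑ Q_i(f_u(γ^{i-1} X)) = 0`, and (iii) the number of linearized polynomials `f` of
`q`-degree at most `k-1` satisfying this identity is at most `q^{m(s-1)}`. -/
theorem stmt7 (q m s k n ρ t r d : ℕ) (hq : IsPrimePow q)
    (hs : 1 ≤ s) (hk1 : 1 ≤ k) (hkm : k ≤ m) (hkn : k ≤ n)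
    {K F : Type*} [Field K] [Field F] [Algebra K F] [Fintype K] [Fintype F]
    (hK : Fintype.card K = q) (hF : Fintype.card F = q ^ m)
    (γ : F) (hγ : ∀ i < m, ∀ j < m, i ≠ j → γ ^ q ^ i ≠ γ ^ q ^ j)
    (α : Fin n → F) (hα : LinearIndependent K α)
    (u : Fin k → F)
    (U : Submodule K (Fin (s + 1) → F))
    (hr : r = n - ρ + t) (hdimU : Module.finrank K U = r)
    (hUV : n - ρ ≤ Module.finrank K
      ↥(U ⊓ Submodule.span K (Set.range fun i : Fin n =>
          Fin.cons (α i) fun j : Fin s => (linPoly q u).eval (γ ^ (j : ℕ) * α i))))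
    (hd : d = (r + s * (k - 1) + 1 + s) / (s + 1)) (hkd : k ≤ d)
    (herr : s * ρ + t + s * (k - 1) < n * s) :
    (∃ (b0 : Fin d → F) (b : Fin s → Fin (d - k + 1) → F),
      ¬(b0 = 0 ∧ b = 0) ∧
      ∀ w ∈ U, (linPoly q b0).eval (w 0) +
        ∑ i : Fin s, (linPoly q (b i)).eval (w i.succ) = 0) ∧
    (∀ (b0 : Fin d → F) (b : Fin s → Fin (d - k + 1) → F),
      ¬(b0 = 0 ∧ b = 0) →
      (∀ w ∈ U, (linPoly q b0).eval (w 0) +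
        ∑ i : Fin s, (linPoly q (b i)).eval (w i.succ) = 0) →
      linPoly q b0 +
        ∑ l : Fin s, (linPoly q (b l)).comp ((linPoly q u).comp (C (γ ^ (l : ℕ)) * X)) = 0) ∧
    (∀ (b0 : Fin d → F) (b : Fin s → Fin (d - k + 1) → F),
      ¬(b0 = 0 ∧ b = 0) →
      (∀ w ∈ U, (linPoly q b0).eval (w 0) +
        ∑ i : Fin s, (linPoly q (b i)).eval (w i.succ) = 0) →
      Set.ncard {a : Fin k → F |
        linPoly q b0 +
          ∑ l : Fin s, (linPoly q (b l)).comp ((linPoly q a).comp (C (γ ^ (l : ℕ)) * X)) = 0}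
        ≤ q ^ (m * (s - 1))) := by
  classical
  have hq2 : 2 ≤ q := hq.two_le
  have hm1 : 1 ≤ m := hk1.trans hkm
  obtain ⟨p, e, hpp, hepos, hqpe⟩ := hq
  have hp : p.Prime := hpp.nat_prime
  haveI : Fact p.Prime := ⟨hp⟩
  have hqpe' : q = p ^ e := hqpe.symm
  haveI hcharF : CharP F p := by
    haveI := ringChar.charP F
    obtain ⟨n', hrc, hcard⟩ := FiniteField.card F (ringChar F)
    have h1 : p ^ (e * m) = (ringChar F) ^ (n' : ℕ) := by
      rw [pow_mul, ← hqpe', ← hF, hcard]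
    have hdvd : p ∣ ringChar F := by
      refine hp.dvd_of_dvd_pow (n := (n' : ℕ)) ?_
      rw [← h1]
      exact dvd_pow_self p (by positivity)
    have hpr : p = ringChar F := (Nat.prime_dvd_prime_iff_eq hp hrc).mp hdvd
    rw [hpr]
    exact ringChar.charP F
  haveI : Module.Finite K F := Module.finite_iff_finite.mpr (by infer_instance)
  have hfrk : Module.finrank K F = m := by
    have h1 : Fintype.card F = Fintype.card K ^ Module.finrank K F := Module.card_eq_pow_finrank
    rw [hF, hK] at h1
    exact (Nat.pow_right_injective hq2 h1).symm
  have hnm : n ≤ m := by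
    have := hα.fintype_card_le_finrank
    simpa [hfrk] using this
  -- arithmetic
  have hρn : ρ < n := by
    have h1 : s * ρ < n * s :=
      lt_of_le_of_lt (by linarith [Nat.zero_le (t + s * (k - 1))]) herr
    have h2 : s * ρ < s * n := by rwa [mul_comm n s] at h1
    exact Nat.lt_of_mul_lt_mul_left h2
  have hA4 : n * s = s * ρ + s * (n - ρ) := by
    rw [mul_comm n s, ← Nat.mul_add, Nat.add_sub_cancel' hρn.le]
  have hsn : t + s * (k - 1) + 1 ≤ s * (n - ρ) := by linarith
  have hdle : d ≤ n - ρ := by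
    have hexp : ((n - ρ) + 1) * (s + 1) = s * (n - ρ) + (n - ρ) + s + 1 := by ring
    have hlt : r + s * (k - 1) + 1 + s < ((n - ρ) + 1) * (s + 1) := by
      rw [hexp, hr]; linarith
    have h2 : (r + s * (k - 1) + 1 + s) / (s + 1) < (n - ρ) + 1 :=
      (Nat.div_lt_iff_lt_mul (Nat.succ_pos s)).mpr hlt
    rw [hd]; omega
  have hd1 : 1 ≤ d := hk1.trans hkd
  have hdm : d ≤ m := hdle.trans ((Nat.sub_le n ρ).trans hnm)
  have hrlt : r + 1 ≤ d + s * (d - k + 1) := by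
    have hdm' := Nat.div_add_mod (r + s * (k - 1) + 1 + s) (s + 1)
    rw [← hd] at hdm'
    have hmod : (r + s * (k - 1) + 1 + s) % (s + 1) ≤ s :=
      Nat.le_of_lt_succ (Nat.mod_lt _ (Nat.succ_pos s))
    have hde : d = (k - 1) + (d - k + 1) := by omega
    have hexp2 : (s + 1) * d = s * (k - 1) + s * (d - k + 1) + ((k - 1) + (d - k + 1)) := by
      nth_rewrite 1 [hde]
      ring
    have hd2 : d + s * (d - k + 1) = (k - 1) + (d - k + 1) + s * (d - k + 1) := by omega
    rw [hd2]
    linarith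
  have hqm1 : 1 < q ^ m := Nat.one_lt_pow (by omega) hq2
  have hVstruct : ∀ w : Fin (s + 1) → F, w ∈ Submodule.span K (Set.range fun i : Fin n =>
      (Fin.cons (α i) fun j : Fin s => (linPoly q u).eval (γ ^ (j : ℕ) * α i)
        : Fin (s + 1) → F)) → ∀ j : Fin s,
      w j.succ = (linPoly q u).eval (γ ^ (j : ℕ) * w 0) := by
    intro w hw j
    rw [Submodule.mem_span_range_iff_exists_fun] at hw
    obtain ⟨c, hc⟩ := hw
    rw [← hc]
    rw [Finset.sum_apply, Finset.sum_apply]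
    simp only [Pi.smul_apply, Fin.cons_succ, Fin.cons_zero]
    have hmul : γ ^ (j : ℕ) * (∑ i : Fin n, c i • α i) =
        ∑ i : Fin n, c i • (γ ^ (j : ℕ) * α i) := by
      rw [Finset.mul_sum]
      exact Finset.sum_congr rfl fun i _ => mul_smul_comm _ _ _
    rw [hmul, ← SLDAux.evalLM_apply (K := K) q hqpe' hK u, map_sum]
    simp only [map_smul, SLDAux.evalLM_apply]
  refine ⟨?_, ?_, ?_⟩
  · -- Part (i): existence of a nonzero interpolation tuple
    haveI : Module.Finite K ↥U := inferInstance
    let β : Module.Basis (Fin (Module.finrank K ↥U)) K ↥U := Module.finBasis K ↥U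
    let Ψ : ((Fin d → F) × (Fin s → Fin (d - k + 1) → F)) → (Fin (Module.finrank K ↥U) → F) :=
      fun tp i => (linPoly q tp.1).eval (((β i : ↥U) : Fin (s + 1) → F) 0)
        + ∑ l : Fin s, (linPoly q (tp.2 l)).eval (((β i : ↥U) : Fin (s + 1) → F) l.succ)
    have hcard : Fintype.card (Fin (Module.finrank K ↥U) → F)
        < Fintype.card ((Fin d → F) × (Fin s → Fin (d - k + 1) → F)) := by
      have hc1 : Fintype.card (Fin (Module.finrank K ↥U) → F) = (q ^ m) ^ r := by
        rw [Fintype.card_fun, Fintype.card_fin, hF, hdimU]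
      have hc3 : Fintype.card (Fin (d - k + 1) → F) = (q ^ m) ^ (d - k + 1) := by
        rw [Fintype.card_fun, Fintype.card_fin, hF]
      have hc2 : Fintype.card (Fin d → F) = (q ^ m) ^ d := by
        rw [Fintype.card_fun, Fintype.card_fin, hF]
      have hc4 : Fintype.card (Fin s → Fin (d - k + 1) → F)
          = ((q ^ m) ^ (d - k + 1)) ^ s := by
        rw [Fintype.card_fun, Fintype.card_fin, hc3]
      rw [Fintype.card_prod, hc1, hc2, hc4, ← pow_mul (q ^ m) (d - k + 1) s,
        ← pow_add (q ^ m) d ((d - k + 1) * s)]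
      refine Nat.pow_lt_pow_right hqm1 ?_
      have : s * (d - k + 1) ≤ (d - k + 1) * s := le_of_eq (mul_comm _ _)
      omega
    obtain ⟨t1, t2, htne, hteq⟩ := Fintype.exists_ne_map_eq_of_card_lt Ψ hcard
    refine ⟨t1.1 - t2.1, t1.2 - t2.2, ?_, ?_⟩
    · rintro ⟨h0, hb⟩
      exact htne (Prod.ext_iff.mpr ⟨sub_eq_zero.mp h0, sub_eq_zero.mp hb⟩)
    · intro w hw
      set L : (Fin (s + 1) → F) →ₗ[K] F :=
        (SLDAux.evalLM q hqpe' hK (t1.1 - t2.1)).comp (LinearMap.proj 0)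
          + ∑ l : Fin s,
            (SLDAux.evalLM q hqpe' hK ((t1.2 - t2.2) l)).comp (LinearMap.proj l.succ)
        with hLdef
      have hLapp : ∀ z : Fin (s + 1) → F, L z = (linPoly q (t1.1 - t2.1)).eval (z 0)
          + ∑ l : Fin s, (linPoly q ((t1.2 - t2.2) l)).eval (z l.succ) := by
        intro z
        rw [hLdef]
        simp only [LinearMap.add_apply, LinearMap.coe_sum, Finset.sum_apply,
          LinearMap.comp_apply, LinearMap.proj_apply, SLDAux.evalLM_apply]
      have hLzero : L.comp U.subtype = 0 := by
        apply Module.Basis.ext β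
        intro i
        rw [LinearMap.comp_apply, LinearMap.zero_apply, Submodule.subtype_apply, hLapp]
        have hΨ := congrFun hteq i
        simp only [Ψ] at hΨ
        have hsub : ∑ l : Fin s, (linPoly q ((t1.2 - t2.2) l)).eval
              (((β i : ↥U) : Fin (s + 1) → F) l.succ)
            = (∑ l : Fin s, (linPoly q (t1.2 l)).eval (((β i : ↥U) : Fin (s + 1) → F) l.succ))
              - ∑ l : Fin s, (linPoly q (t2.2 l)).eval (((β i : ↥U) : Fin (s + 1) → F) l.succ) := by
          rw [← Finset.sum_sub_distrib]
          refine Finset.sum_congr rfl fun l _ => ?_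
          rw [Pi.sub_apply, SLDAux.linPoly_sub, eval_sub]
        rw [SLDAux.linPoly_sub, eval_sub, hsub]
        linear_combination hΨ
      have h0 := LinearMap.ext_iff.mp hLzero ⟨w, hw⟩
      rw [LinearMap.comp_apply, LinearMap.zero_apply, Submodule.subtype_apply] at h0
      rw [hLapp] at h0
      exact h0
  · -- Part (ii): every interpolation tuple yields the polynomial identity
    intro b0 b hne hvan
    haveI : Fintype ↥(U ⊓ Submodule.span K (Set.range fun i : Fin n =>
        Fin.cons (α i) fun j : Fin s => (linPoly q u).eval (γ ^ (j : ℕ) * α i))) :=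
      Fintype.ofFinite _
    set W := U ⊓ Submodule.span K (Set.range fun i : Fin n =>
        Fin.cons (α i) fun j : Fin s => (linPoly q u).eval (γ ^ (j : ℕ) * α i)) with hWdef
    set P := linPoly q b0 + ∑ l : Fin s,
        (linPoly q (b l)).comp ((linPoly q u).comp (C (γ ^ (l : ℕ)) * X)) with hPdef
    have hPdeg : P.natDegree ≤ q ^ (d - 1) := by
      rw [hPdef]
      refine (natDegree_add_le _ _).trans (max_le ?_ ?_)
      · exact SLDAux.natDegree_linPoly_le q (by omega) b0
      · refine natDegree_sum_le_of_forall_le _ _ fun l _ => ?_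
        refine natDegree_comp_le.trans ?_
        have h1 : (linPoly q (b l)).natDegree ≤ q ^ (d - k) := by
          have := SLDAux.natDegree_linPoly_le q (by omega) (b l)
          simpa using this
        have h3 : (C (γ ^ (l : ℕ)) * X).natDegree ≤ 1 :=
          (natDegree_C_mul_le _ _).trans natDegree_X_le
        have h2 : ((linPoly q u).comp (C (γ ^ (l : ℕ)) * X)).natDegree ≤ q ^ (k - 1) := by
          refine natDegree_comp_le.trans ?_
          calc (linPoly q u).natDegree * (C (γ ^ (l : ℕ)) * X).natDegree
              ≤ q ^ (k - 1) * 1 :=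
                Nat.mul_le_mul (SLDAux.natDegree_linPoly_le q (by omega) u) h3
            _ = q ^ (k - 1) := mul_one _
        calc (linPoly q (b l)).natDegree *
              ((linPoly q u).comp (C (γ ^ (l : ℕ)) * X)).natDegree
            ≤ q ^ (d - k) * q ^ (k - 1) := Nat.mul_le_mul h1 h2
          _ = q ^ (d - 1) := by rw [← pow_add]; congr 1; omega
    have hevalP : ∀ w : ↥W, P.eval ((w : Fin (s + 1) → F) 0) = 0 := by
      intro w
      obtain ⟨hwU, hwV⟩ := Submodule.mem_inf.mp w.2
      have h0 := hvan w.1 hwU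
      rw [hPdef, eval_add, eval_finset_sum]
      have hterm : ∀ l : Fin s,
          (((linPoly q (b l)).comp ((linPoly q u).comp (C (γ ^ (l : ℕ)) * X))).eval
              ((w : Fin (s + 1) → F) 0))
            = (linPoly q (b l)).eval ((w : Fin (s + 1) → F) l.succ) := by
        intro l
        rw [eval_comp, eval_comp, eval_mul, eval_C, eval_X, hVstruct w.1 hwV l]
      rw [Finset.sum_congr rfl fun l _ => hterm l]
      exact h0
    have hinj0 : Function.Injective (fun w : ↥W => (w : Fin (s + 1) → F) 0) := by
      intro w w' h
      have hwV := (Submodule.mem_inf.mp w.2).2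
      have hwV' := (Submodule.mem_inf.mp w'.2).2
      apply Subtype.ext
      funext idx
      refine Fin.cases ?_ ?_ idx
      · exact h
      · intro j
        rw [hVstruct w.1 hwV j, hVstruct w'.1 hwV' j]
        simp only at h
        rw [h]
    have hcard2 : P.natDegree < Fintype.card ↥W := by
      have hc : Fintype.card ↥W = q ^ Module.finrank K ↥W := by
        rw [Module.card_eq_pow_finrank (K := K), hK]
      have h1 : q ^ d ≤ Fintype.card ↥W := by
        rw [hc]
        exact Nat.pow_le_pow_right (by omega) (hdle.trans hUV)
      have hlt : q ^ (d - 1) < q ^ d := Nat.pow_lt_pow_right (by omega) (by omega)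
      omega
    exact eq_zero_of_natDegree_lt_card_of_eval_eq_zero P hinj0 hevalP hcard2
  · -- Part (iii): list size bound
    intro b0 b hne _hvan
    by_cases hb : b = 0
    · have hb0 : b0 ≠ 0 := fun h => hne ⟨h, hb⟩
      have hempty : {a : Fin k → F |
          linPoly q b0 + ∑ l : Fin s,
            (linPoly q (b l)).comp ((linPoly q a).comp (C (γ ^ (l : ℕ)) * X)) = 0} = ∅ := by
        ext a
        simp only [Set.mem_setOf_eq, Set.mem_empty_iff_false, iff_false]
        intro hcontra
        rw [hb] at hcontra
        simp only [Pi.zero_apply, SLDAux.linPoly_zero, zero_comp,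
          Finset.sum_const_zero, add_zero] at hcontra
        exact SLDAux.linPoly_ne_zero q hq2 hb0 hcontra
      rw [hempty, Set.ncard_empty]
      exact Nat.zero_le _
    · have hbne : ∃ i : Fin (d - k + 1), ∃ l, b l i ≠ 0 := by
        by_contra hc
        push_neg at hc
        exact hb (funext fun l => funext fun i => hc i l)
      set F0 : Finset (Fin (d - k + 1)) :=
        Finset.univ.filter (fun i => ∃ l, b l i ≠ 0) with hF0
      have hF0ne : F0.Nonempty := by
        obtain ⟨i, l, h⟩ := hbne
        exact ⟨i, by simp only [hF0, Finset.mem_filter, Finset.mem_univ, true_and]; exact ⟨l, h⟩⟩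
      set i₀ := F0.min' hF0ne with hi₀
      have hi₀mem : i₀ ∈ F0 := F0.min'_mem hF0ne
      obtain ⟨l₀, hl₀⟩ : ∃ l, b l i₀ ≠ 0 := by
        have := hi₀mem
        rw [hF0, Finset.mem_filter] at this
        exact this.2
      have hmin : ∀ i : Fin (d - k + 1), (i : ℕ) < (i₀ : ℕ) → ∀ l, b l i = 0 := by
        intro i hi l
        by_contra hcon
        have hiF : i ∈ F0 := by
          rw [hF0, Finset.mem_filter]
          exact ⟨Finset.mem_univ i, ⟨l, hcon⟩⟩
        have := F0.min'_le i hiF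
        rw [← hi₀] at this
        rw [Fin.le_def] at this
        omega
      set g : Fin k → F :=
        fun j => ∑ l : Fin s, b l i₀ * (γ ^ q ^ ((i₀ : ℕ) + (j : ℕ))) ^ (l : ℕ) with hg
      set B : Finset (Fin k) := Finset.univ.filter (fun j => g j = 0) with hB
      have hlm : ∀ j : Fin k, (i₀ : ℕ) + (j : ℕ) < m := by
        intro j
        have h1 := i₀.isLt
        have h2 := j.isLt
        omega
      have hBcard : B.card ≤ s - 1 := by
        set A : F[X] := ∑ l : Fin s, C (b l i₀) * X ^ (l : ℕ) with hA
        have hAne : A ≠ 0 := by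
          intro h
          have hcoeff := SLDAux.coeff_sum_C_mul_X_pow (F := F) (fun l : Fin s => (l : ℕ))
            Fin.val_injective (fun l => b l i₀) l₀
          rw [← hA, h] at hcoeff
          simp only [coeff_zero] at hcoeff
          exact hl₀ hcoeff.symm
        have hAdeg : A.natDegree ≤ s - 1 := by
          rw [hA]
          refine natDegree_sum_le_of_forall_le _ _ fun l _ => ?_
          refine (natDegree_C_mul_le _ _).trans ?_
          rw [natDegree_X_pow]
          have := l.isLt
          omega
        have hsubset : B.image (fun j : Fin k => γ ^ q ^ ((i₀ : ℕ) + (j : ℕ)))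
            ⊆ A.roots.toFinset := by
          intro x hx
          rw [Finset.mem_image] at hx
          obtain ⟨j, hjB, rfl⟩ := hx
          rw [Multiset.mem_toFinset, mem_roots hAne]
          have hgj : g j = 0 := by
            rw [hB, Finset.mem_filter] at hjB
            exact hjB.2
          rw [hg] at hgj
          simp only [IsRoot.def, hA, eval_finset_sum, eval_mul, eval_C, eval_pow, eval_X]
          exact hgj
        have hinjφ : Set.InjOn (fun j : Fin k => γ ^ q ^ ((i₀ : ℕ) + (j : ℕ))) ↑B := by
          intro j1 _ j2 _ hj12
          by_contra hne'
          exact hγ ((i₀ : ℕ) + (j1 : ℕ)) (hlm j1) ((i₀ : ℕ) + (j2 : ℕ)) (hlm j2)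
            (by
              intro hcontra
              exact hne' (Fin.ext (by omega))) hj12
        calc B.card = (B.image (fun j : Fin k => γ ^ q ^ ((i₀ : ℕ) + (j : ℕ)))).card :=
              (Finset.card_image_of_injOn hinjφ).symm
          _ ≤ A.roots.toFinset.card := Finset.card_le_card hsubset
          _ ≤ Multiset.card A.roots := Multiset.toFinset_card_le _
          _ ≤ A.natDegree := A.card_roots'
          _ ≤ s - 1 := hAdeg
      -- uniqueness given agreement on B
      have key : ∀ a a' : Fin k → F,
          (linPoly q b0 + ∑ l : Fin s,
            (linPoly q (b l)).comp ((linPoly q a).comp (C (γ ^ (l : ℕ)) * X)) = 0) →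
          (linPoly q b0 + ∑ l : Fin s,
            (linPoly q (b l)).comp ((linPoly q a').comp (C (γ ^ (l : ℕ)) * X)) = 0) →
          (∀ j ∈ B, a j = a' j) → a = a' := by
        intro a a' ha ha' hagree
        have hrw : ∀ (c : Fin k → F) (l : Fin s),
            (linPoly q (b l)).comp ((linPoly q c).comp (C (γ ^ (l : ℕ)) * X))
              = ∑ i : Fin (d - k + 1), ∑ j : Fin k,
                  C (b l i * (c j * (γ ^ (l : ℕ)) ^ q ^ (j : ℕ)) ^ q ^ (i : ℕ))
                    * X ^ q ^ ((i : ℕ) + (j : ℕ)) := by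
          intro c l
          rw [SLDAux.linPoly_comp_CX, SLDAux.linPoly_comp_linPoly q hqpe']
        have hsumEq : (∑ l : Fin s,
              (linPoly q (b l)).comp ((linPoly q a).comp (C (γ ^ (l : ℕ)) * X)))
            = ∑ l : Fin s,
              (linPoly q (b l)).comp ((linPoly q a').comp (C (γ ^ (l : ℕ)) * X)) :=
          add_left_cancel (ha.trans ha'.symm)
        have hsum2 : (∑ l : Fin s, ∑ i : Fin (d - k + 1), ∑ j : Fin k,
              C (b l i * (a j * (γ ^ (l : ℕ)) ^ q ^ (j : ℕ)) ^ q ^ (i : ℕ))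
                * X ^ q ^ ((i : ℕ) + (j : ℕ)))
            = ∑ l : Fin s, ∑ i : Fin (d - k + 1), ∑ j : Fin k,
              C (b l i * (a' j * (γ ^ (l : ℕ)) ^ q ^ (j : ℕ)) ^ q ^ (i : ℕ))
                * X ^ q ^ ((i : ℕ) + (j : ℕ)) := by
          rw [← Finset.sum_congr rfl fun l _ => hrw a l,
            ← Finset.sum_congr rfl fun l _ => hrw a' l]
          exact hsumEq
        have main : ∀ N : ℕ, ∀ jv : Fin k, (jv : ℕ) < N → a jv = a' jv := by
          intro N
          induction N with
          | zero => exact fun jv hjv => absurd hjv (Nat.not_lt_zero _)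
          | succ N ih =>
            intro jv hjv
            rcases Nat.lt_or_ge (jv : ℕ) N with hcase | hcase
            · exact ih jv hcase
            have hjvN : (jv : ℕ) = N := by omega
            by_cases hjB : jv ∈ B
            · exact hagree jv hjB
            -- coefficient extraction at degree q^((i₀:ℕ)+(jv:ℕ))
            have hco : (∑ l : Fin s, ∑ i : Fin (d - k + 1), ∑ j : Fin k,
                  if (i : ℕ) + (j : ℕ) = (i₀ : ℕ) + (jv : ℕ) then
                    b l i * (a j * (γ ^ (l : ℕ)) ^ q ^ (j : ℕ)) ^ q ^ (i : ℕ) else 0)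
                = ∑ l : Fin s, ∑ i : Fin (d - k + 1), ∑ j : Fin k,
                  if (i : ℕ) + (j : ℕ) = (i₀ : ℕ) + (jv : ℕ) then
                    b l i * (a' j * (γ ^ (l : ℕ)) ^ q ^ (j : ℕ)) ^ q ^ (i : ℕ) else 0 := by
              have hcc : (∑ l : Fin s, ∑ i : Fin (d - k + 1), ∑ j : Fin k,
                    C (b l i * (a j * (γ ^ (l : ℕ)) ^ q ^ (j : ℕ)) ^ q ^ (i : ℕ))
                      * X ^ q ^ ((i : ℕ) + (j : ℕ))).coeff (q ^ ((i₀ : ℕ) + (jv : ℕ)))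
                  = (∑ l : Fin s, ∑ i : Fin (d - k + 1), ∑ j : Fin k,
                    C (b l i * (a' j * (γ ^ (l : ℕ)) ^ q ^ (j : ℕ)) ^ q ^ (i : ℕ))
                      * X ^ q ^ ((i : ℕ) + (j : ℕ))).coeff (q ^ ((i₀ : ℕ) + (jv : ℕ))) := by
                rw [hsum2]
              rw [finset_sum_coeff, finset_sum_coeff] at hcc
              rw [Finset.sum_congr rfl fun l (_ : l ∈ Finset.univ) =>
                    SLDAux.coeff_double_sum q hq2
                      (fun i j => b l i * (a j * (γ ^ (l : ℕ)) ^ q ^ (j : ℕ)) ^ q ^ (i : ℕ))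
                      ((i₀ : ℕ) + (jv : ℕ)),
                  Finset.sum_congr rfl fun l (_ : l ∈ Finset.univ) =>
                    SLDAux.coeff_double_sum q hq2
                      (fun i j => b l i * (a' j * (γ ^ (l : ℕ)) ^ q ^ (j : ℕ)) ^ q ^ (i : ℕ))
                      ((i₀ : ℕ) + (jv : ℕ))] at hcc
              exact hcc
            have hz : ∑ l : Fin s, ∑ i : Fin (d - k + 1), ∑ j : Fin k,
                ((if (i : ℕ) + (j : ℕ) = (i₀ : ℕ) + (jv : ℕ) then
                    b l i * (a j * (γ ^ (l : ℕ)) ^ q ^ (j : ℕ)) ^ q ^ (i : ℕ) else 0)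
                  - (if (i : ℕ) + (j : ℕ) = (i₀ : ℕ) + (jv : ℕ) then
                    b l i * (a' j * (γ ^ (l : ℕ)) ^ q ^ (j : ℕ)) ^ q ^ (i : ℕ) else 0)) = 0 := by
              simp only [Finset.sum_sub_distrib]
              exact sub_eq_zero.mpr hco
            have hterm : ∀ (l : Fin s) (i : Fin (d - k + 1)) (j : Fin k),
                ((if (i : ℕ) + (j : ℕ) = (i₀ : ℕ) + (jv : ℕ) then
                    b l i * (a j * (γ ^ (l : ℕ)) ^ q ^ (j : ℕ)) ^ q ^ (i : ℕ) else 0)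
                  - (if (i : ℕ) + (j : ℕ) = (i₀ : ℕ) + (jv : ℕ) then
                    b l i * (a' j * (γ ^ (l : ℕ)) ^ q ^ (j : ℕ)) ^ q ^ (i : ℕ) else 0))
                = if i = i₀ ∧ j = jv then
                    (a jv - a' jv) ^ q ^ (i₀ : ℕ)
                      * (b l i₀ * (γ ^ q ^ ((i₀ : ℕ) + (jv : ℕ))) ^ (l : ℕ)) else 0 := by
              intro l i j
              by_cases hc : (i : ℕ) + (j : ℕ) = (i₀ : ℕ) + (jv : ℕ)
              · rw [if_pos hc, if_pos hc, ← mul_sub, ← SLDAux.pow_q_sub hqpe', ← sub_mul]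
                rcases Nat.lt_trichotomy (i : ℕ) (i₀ : ℕ) with hlt | heq | hgt
                · rw [hmin i hlt l, zero_mul,
                    if_neg (by rintro ⟨rfl, _⟩; omega)]
                · have hii : i = i₀ := Fin.ext heq
                  have hjj : j = jv := Fin.ext (by omega)
                  rw [if_pos ⟨hii, hjj⟩, hii, hjj]
                  have hγpow : (((γ ^ (l : ℕ)) ^ q ^ (jv : ℕ)) ^ q ^ (i₀ : ℕ))
                      = (γ ^ q ^ ((i₀ : ℕ) + (jv : ℕ))) ^ (l : ℕ) := by
                    rw [← pow_mul, ← pow_mul, ← pow_mul]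
                    congr 1
                    rw [pow_add]
                    ring
                  rw [mul_pow, hγpow]
                  ring
                · have hjlt : (j : ℕ) < (jv : ℕ) := by omega
                  rw [ih j (by omega), sub_self, zero_mul,
                    zero_pow (Nat.pow_pos (show 0 < q by omega)).ne', mul_zero,
                    if_neg (by rintro ⟨rfl, _⟩; omega)]
              · rw [if_neg hc, if_neg hc, sub_self,
                  if_neg (by rintro ⟨rfl, rfl⟩; exact hc rfl)]
            rw [Finset.sum_congr rfl fun l _ => Finset.sum_congr rfl fun i _ =>
              Finset.sum_congr rfl fun j _ => hterm l i j] at hz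
            have hcollapse : ∀ v : F,
                (∑ i : Fin (d - k + 1), ∑ j : Fin k,
                  if i = i₀ ∧ j = jv then v else 0) = v := by
              intro v
              rw [Finset.sum_eq_single i₀]
              · rw [Finset.sum_eq_single jv]
                · rw [if_pos ⟨rfl, rfl⟩]
                · intro j _ hj
                  rw [if_neg (fun h => hj h.2)]
                · intro h
                  exact absurd (Finset.mem_univ jv) h
              · intro i _ hi
                exact Finset.sum_eq_zero fun j _ => if_neg (fun h => hi h.1)
              · intro h
                exact absurd (Finset.mem_univ i₀) h
            rw [Finset.sum_congr rfl fun l _ => hcollapse _, ← Finset.mul_sum] at hz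
            have hgjv : g jv ≠ 0 := by
              rw [hB, Finset.mem_filter] at hjB
              intro hcontra
              exact hjB ⟨Finset.mem_univ jv, hcontra⟩
            rw [hg] at hgjv
            rcases mul_eq_zero.mp hz with h1 | h1
            · have := pow_eq_zero_iff
                ((Nat.pow_pos (show 0 < q by omega)).ne' : q ^ (i₀ : ℕ) ≠ 0) |>.mp h1
              exact sub_eq_zero.mp this
            · exact absurd h1 hgjv
        exact funext fun jv => main k jv jv.isLt
      -- counting
      haveI : Finite ↥{a : Fin k → F |
          linPoly q b0 + ∑ l : Fin s,
            (linPoly q (b l)).comp ((linPoly q a).comp (C (γ ^ (l : ℕ)) * X)) = 0} :=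
        Subtype.finite
      have hinj2 : Function.Injective
          (fun (a : ↥{a : Fin k → F |
            linPoly q b0 + ∑ l : Fin s,
              (linPoly q (b l)).comp ((linPoly q a).comp (C (γ ^ (l : ℕ)) * X)) = 0})
            (j : ↥B) => a.1 j.1) := by
        intro a a' h
        apply Subtype.ext
        refine key a.1 a'.1 a.2 a'.2 fun j hj => ?_
        exact congrFun h ⟨j, hj⟩
      calc Set.ncard {a : Fin k → F |
            linPoly q b0 + ∑ l : Fin s,
              (linPoly q (b l)).comp ((linPoly q a).comp (C (γ ^ (l : ℕ)) * X)) = 0}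
          = Nat.card ↥{a : Fin k → F |
            linPoly q b0 + ∑ l : Fin s,
              (linPoly q (b l)).comp ((linPoly q a).comp (C (γ ^ (l : ℕ)) * X)) = 0} :=
            (Nat.card_coe_set_eq _).symm
        _ ≤ Nat.card (↥B → F) := Nat.card_le_card_of_injective _ hinj2
        _ = (q ^ m) ^ B.card := by
            rw [Nat.card_eq_fintype_card, Fintype.card_fun, hF, Fintype.card_coe]
        _ ≤ (q ^ m) ^ (s - 1) := Nat.pow_le_pow_right (by positivity) hBcard
        _ = q ^ (m * (s - 1)) := by rw [← pow_mul]
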